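/- Let ε : [0,l] → ℝ be measurable with 1 ≤ ε(s), c > 0, and z ∈ ℂ with Im(z²) < 0. Let ψ solve ψ'' = -(z²/c²)·ε·ψ with ψ(0)=0, ψ'(0)=1, and suppose ψ(s) ≠ 0 on (0,l]. Define ξ(s) as a continuous branch of arg(ψ²(s)) on (0,l]. Then ξ is strictly increasing on (0,l]. -/

import Mathlib

open Set Complex

lemma int_valued_eq_zero {a b : ℝ} (hab : a ≤ b) {g : ℝ → ℝ}
    (hg : ContinuousOn g (Icc a b))
    (hint : ∀ s ∈ Icc a b, ∃ n : ℤ, g s = n)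
    (ha : g a = 0) : g b = 0 := by
  obtain ⟨n, hn⟩ := hint b ⟨hab, le_refl b⟩
  rcases lt_trichotomy (g b) 0 with hlt | heq | hgt
  · exfalso
    have hn0 : n < 0 := by exact_mod_cast hn ▸ hlt
    have hle : (n : ℝ) ≤ -1 := by exact_mod_cast Int.le_sub_one_of_lt hn0
    have hmem : (n : ℝ) + 1/2 ∈ Icc (g b) (g a) := by
      constructor
      · rw [hn]; linarith
      · rw [ha]; linarith
    obtain ⟨s, hs, hgs⟩ := intermediate_value_Icc' hab hg hmem
    obtain ⟨m, hm⟩ := hint s hs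
    rw [hm] at hgs
    have h2 : (2 * m : ℤ) = 2 * n + 1 := by
      have : (2 * m : ℝ) = 2 * n + 1 := by linarith
      exact_mod_cast this
    omega
  · exact heq
  · exfalso
    have hn0 : 0 < n := by exact_mod_cast hn ▸ hgt
    have hle : (1 : ℝ) ≤ (n : ℝ) := by exact_mod_cast hn0
    have hmem : (n : ℝ) - 1/2 ∈ Icc (g a) (g b) := by
      constructor
      · rw [ha]; linarith
      · rw [hn]; linarith
    obtain ⟨s, hs, hgs⟩ := intermediate_value_Icc hab hg hmem
    obtain ⟨m, hm⟩ := hint s hs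
    rw [hm] at hgs
    have h2 : (2 * m : ℤ) = 2 * n - 1 := by
      have : (2 * m : ℝ) = 2 * n - 1 := by linarith
      exact_mod_cast this
    omega

/-- If `Im (z²) < 0` and `ψ` solves `ψ'' = -(z²/c²)·ε·ψ`, `ψ(0)=0`, `ψ'(0)=1`, and
`ψ ≠ 0` on `(0,l]`, then any continuous branch `ξ` of `arg ψ²` on `(0,l]` is
strictly increasing. -/
theorem arg_psi_sq_strictMono
    (l c : ℝ) (hl : 0 < l) (hc : 0 < c)
    (ε : ℝ → ℝ) (hmeas : Measurable ε) (hε : ∀ s, 1 ≤ ε s)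
    (z : ℂ) (hz : (z ^ 2).im < 0)
    (ψ ψ' : ℝ → ℂ)
    (hψ : ∀ s ∈ Icc (0 : ℝ) l, HasDerivAt ψ (ψ' s) s)
    (hψ' : ∀ s ∈ Icc (0 : ℝ) l,
      HasDerivAt ψ' (-(z ^ 2 / (c : ℂ) ^ 2) * (ε s : ℂ) * ψ s) s)
    (h0 : ψ 0 = 0) (h1 : ψ' 0 = 1)
    (hne : ∀ s ∈ Ioc (0 : ℝ) l, ψ s ≠ 0)
    (ξ : ℝ → ℝ) (hξcont : ContinuousOn ξ (Ioc (0 : ℝ) l))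
    (hξarg : ∀ s ∈ Ioc (0 : ℝ) l,
      (ψ s) ^ 2 = (‖(ψ s) ^ 2‖ : ℂ) * Complex.exp ((ξ s : ℂ) * Complex.I)) :
    StrictMonoOn ξ (Ioc (0 : ℝ) l) := by
  set W : ℝ → ℝ := fun s => (ψ' s * (starRingEnd ℂ) (ψ s)).im with hWdef
  have hzc : 0 < -(z ^ 2).im / c ^ 2 := div_pos (by linarith) (by positivity)
  have hW : ∀ s ∈ Icc (0 : ℝ) l,
      HasDerivAt W (ε s * Complex.normSq (ψ s) * (-(z ^ 2).im / c ^ 2)) s := by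
    intro s hs
    have hconj : HasDerivAt (fun t => (starRingEnd ℂ) (ψ t)) ((starRingEnd ℂ) (ψ' s)) s := by
      exact (hψ s hs).star
    have h2 := (hψ' s hs).mul hconj
    have h3 := (Complex.imCLM.hasFDerivAt).comp_hasDerivAt s h2
    refine h3.congr_deriv (Eq.symm ?_)
    have hre : ((c : ℂ) ^ 2) = ((c ^ 2 : ℝ) : ℂ) := by push_cast; ring
    simp only [Complex.imCLM_apply, Complex.add_im]
    rw [mul_assoc (-(z ^ 2 / (c : ℂ) ^ 2) * (ε s : ℂ)), Complex.mul_conj, Complex.mul_conj]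
    have h4 : ∀ (w : ℂ) (r t : ℝ), (w * ↑r * ↑t).im = w.im * r * t := by
      intro w r t; simp [Complex.mul_im]
    rw [h4]
    have h5 : (-(z ^ 2 / (c : ℂ) ^ 2)).im = -(z ^ 2).im / c ^ 2 := by
      rw [hre, Complex.neg_im, Complex.div_ofReal_im]
      ring
    rw [h5]
    simp
    ring
  have hWcont : ContinuousOn W (Icc (0:ℝ) l) :=
    fun s hs => ((hW s hs).continuousAt).continuousWithinAt
  have hWmono : StrictMonoOn W (Icc (0:ℝ) l) := by
    apply strictMonoOn_of_deriv_pos (convex_Icc 0 l) hWcont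
    intro x hx
    rw [interior_Icc] at hx
    rw [(hW x ⟨hx.1.le, hx.2.le⟩).deriv]
    have hx' : ψ x ≠ 0 := hne x ⟨hx.1, hx.2.le⟩
    have he1 : (0:ℝ) < ε x := lt_of_lt_of_le one_pos (hε x)
    have he2 : 0 < Complex.normSq (ψ x) := Complex.normSq_pos.2 hx'
    exact mul_pos (mul_pos he1 he2) hzc
  have hW0 : W 0 = 0 := by simp [hWdef, h0]
  have hWpos : ∀ s ∈ Ioc (0:ℝ) l, 0 < W s := by
    intro s hs
    have := hWmono (left_mem_Icc.2 hl.le) ⟨hs.1.le, hs.2⟩ hs.1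
    rwa [hW0] at this
  have himpos : ∀ s ∈ Ioc (0:ℝ) l, 0 < (ψ' s / ψ s).im := by
    intro s hs
    have hx' : ψ s ≠ 0 := hne s hs
    have h2 : 0 < Complex.normSq (ψ s) := Complex.normSq_pos.2 hx'
    have heq : (ψ' s / ψ s).im = W s / Complex.normSq (ψ s) := by
      rw [Complex.div_im]
      simp [hWdef, Complex.mul_im]
      ring
    rw [heq]
    exact div_pos (hWpos s hs) h2
  intro a ha b hb hab
  have hsub : Icc a b ⊆ Ioc (0:ℝ) l := fun t ht => ⟨lt_of_lt_of_le ha.1 ht.1, le_trans ht.2 hb.2⟩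
  have hsubIcc : Ioc (0:ℝ) l ⊆ Icc 0 l := fun t ht => ⟨ht.1.le, ht.2⟩
  set φ : ℝ → ℂ := fun t => 2 * (ψ' t / ψ t) with hφdef
  have hφcontAt : ∀ t ∈ Ioc (0:ℝ) l, ContinuousAt φ t := by
    intro t ht
    exact continuousAt_const.mul (((hψ' t (hsubIcc ht)).continuousAt).div
      ((hψ t (hsubIcc ht)).continuousAt) (hne t ht))
  have hφcont : ContinuousOn φ (Icc a b) :=
    fun t ht => (hφcontAt t (hsub ht)).continuousWithinAt
  have hφint : IntervalIntegrable φ MeasureTheory.volume a b := by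
    apply ContinuousOn.intervalIntegrable
    rwa [uIcc_of_le hab.le]
  set L : ℝ → ℂ := fun s => ∫ t in a..s, φ t with hLdef
  have hLcont : ContinuousOn L (Icc a b) := by
    have := intervalIntegral.continuousOn_primitive_interval' hφint (left_mem_uIcc (a := a) (b := b))
    rwa [uIcc_of_le hab.le] at this
  have hLd : ∀ x ∈ Ico a b, HasDerivAt L (φ x) x := by
    intro x hx
    have hxmem : x ∈ Ioo (0:ℝ) l := ⟨lt_of_lt_of_le ha.1 hx.1, lt_of_lt_of_le hx.2 hb.2⟩
    apply intervalIntegral.integral_hasDerivAt_right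
    · exact hφint.mono_set (by
        rw [uIcc_of_le hab.le, uIcc_of_le hx.1]
        exact Icc_subset_Icc le_rfl hx.2.le)
    · have hopen : ContinuousOn φ (Ioo (0:ℝ) l) :=
        fun t ht => (hφcontAt t ⟨ht.1, ht.2.le⟩).continuousWithinAt
      exact hopen.stronglyMeasurableAtFilter isOpen_Ioo x hxmem
    · exact hφcontAt x ⟨hxmem.1, hxmem.2.le⟩
  set F : ℝ → ℂ := fun s => ψ s ^ 2 * Complex.exp (-(L s)) with hFdef
  have hFd : ∀ x ∈ Ico a b, HasDerivAt F 0 x := by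
    intro x hx
    have hxI : x ∈ Ioc (0:ℝ) l := hsub ⟨hx.1, hx.2.le⟩
    have h1 : HasDerivAt (fun s => ψ s ^ 2) (2 * ψ x * ψ' x) x := by
      have h := (hψ x (hsubIcc hxI)).mul (hψ x (hsubIcc hxI))
      have hfe : (ψ * ψ) = (fun s => ψ s ^ 2) := by funext t; simp only [Pi.mul_apply]; ring
      rw [hfe] at h
      refine h.congr_deriv (Eq.symm ?_)
      ring
    have h2 : HasDerivAt (fun s => Complex.exp (-(L s)))
        (Complex.exp (-(L x)) * (-(φ x))) x := ((hLd x hx).neg).cexp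
    refine (h1.mul h2).congr_deriv (Eq.symm ?_)
    have hpx : ψ x ≠ 0 := hne x hxI
    rw [hφdef]
    field_simp
    ring
  have hFcont : ContinuousOn F (Icc a b) := by
    have hψcont : ContinuousOn ψ (Icc a b) :=
      fun t ht => ((hψ t (hsubIcc (hsub ht))).continuousAt).continuousWithinAt
    exact (hψcont.pow 2).mul (hLcont.neg.cexp)
  have hFconst : ∀ s ∈ Icc a b, F s = F a :=
    fun s hs => constant_of_has_deriv_right_zero hFcont
      (fun x hx => (hFd x hx).hasDerivWithinAt) s hs
  have hLa : L a = 0 := intervalIntegral.integral_same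
  have hkey : ∀ s ∈ Icc a b, ψ s ^ 2 = ψ a ^ 2 * Complex.exp (L s) := by
    intro s hs
    have h := hFconst s hs
    rw [hFdef] at h
    simp only at h
    rw [hLa] at h
    simp only [neg_zero, Complex.exp_zero, mul_one] at h
    rw [Complex.exp_neg, mul_inv_eq_iff_eq_mul₀ (Complex.exp_ne_zero _)] at h
    exact h
  have hexp : ∀ s ∈ Icc a b, ∃ n : ℤ, ξ s = ξ a + (L s).im + n * (2 * Real.pi) := by
    intro s hs
    have hsI : s ∈ Ioc (0:ℝ) l := hsub hs
    have h1 := hξarg s hsI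
    have h2 := hξarg a ha
    have habs : ‖ψ s ^ 2‖ = ‖ψ a ^ 2‖ * Real.exp ((L s).re) := by
      rw [hkey s hs, norm_mul, Complex.norm_exp]
    have hB : (‖ψ a ^ 2‖ : ℂ) ≠ 0 :=
      Complex.ofReal_ne_zero.2 (norm_ne_zero_iff.2 (pow_ne_zero 2 (hne a ha)))
    have hR : ((Real.exp ((L s).re) : ℝ) : ℂ) ≠ 0 := by
      exact_mod_cast Real.exp_ne_zero _
    have hLsplit : Complex.exp (L s)
        = (Real.exp ((L s).re) : ℂ) * Complex.exp (((L s).im : ℂ) * Complex.I) := by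
      rw [Complex.ofReal_exp, ← Complex.exp_add]
      congr 1
      exact (Complex.re_add_im _).symm
    have e1 : ((‖ψ a ^ 2‖ : ℂ) * (Real.exp ((L s).re) : ℂ))
          * Complex.exp ((ξ s : ℂ) * Complex.I)
        = ((‖ψ a ^ 2‖ : ℂ) * (Real.exp ((L s).re) : ℂ))
          * Complex.exp ((ξ a : ℂ) * Complex.I + ((L s).im : ℂ) * Complex.I) := by
      rw [Complex.exp_add]
      calc ((‖ψ a ^ 2‖ : ℂ) * (Real.exp ((L s).re) : ℂ))
            * Complex.exp ((ξ s : ℂ) * Complex.I)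
          = (‖ψ s ^ 2‖ : ℂ) * Complex.exp ((ξ s : ℂ) * Complex.I) := by
            rw [habs]; push_cast; ring
        _ = ψ s ^ 2 := h1.symm
        _ = ψ a ^ 2 * Complex.exp (L s) := hkey s hs
        _ = _ := by
              conv_lhs => rw [h2, hLsplit]
              ring
    have e2 := mul_left_cancel₀ (mul_ne_zero hB hR) e1
    rw [Complex.exp_eq_exp_iff_exists_int] at e2
    obtain ⟨n, hn⟩ := e2
    refine ⟨n, ?_⟩
    have him := congrArg Complex.im hn
    simp [Complex.add_im, Complex.mul_im, Complex.mul_re] at him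
    push_cast at him ⊢
    linarith [him]
  set g : ℝ → ℝ := fun s => (ξ s - ξ a - (L s).im) / (2 * Real.pi) with hgdef
  have hgc : ContinuousOn g (Icc a b) :=
    (((hξcont.mono hsub).sub continuousOn_const).sub
      (Complex.continuous_im.comp_continuousOn hLcont)).div_const _
  have hgint : ∀ s ∈ Icc a b, ∃ n : ℤ, g s = n := by
    intro s hs
    obtain ⟨n, hn⟩ := hexp s hs
    refine ⟨n, ?_⟩
    rw [hgdef]
    simp only
    rw [hn]
    field_simp
    ring
  have hga : g a = 0 := by
    rw [hgdef]
    simp [hLa]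
  have hgb := int_valued_eq_zero hab.le hgc hgint hga
  have hxib : ξ b = ξ a + (L b).im := by
    rw [hgdef] at hgb
    simp only at hgb
    rw [div_eq_zero_iff] at hgb
    rcases hgb with h | h
    · linarith
    · exact absurd h (by positivity)
  rw [hxib]
  have hpos : 0 < (L b).im := by
    have hcomm : (∫ t in a..b, (φ t).im) = (L b).im := by
      have := Complex.imCLM.intervalIntegral_comp_comm hφint
      simpa [hLdef] using this
    rw [← hcomm]
    apply intervalIntegral.intervalIntegral_pos_of_pos_on
    · apply ContinuousOn.intervalIntegrable
      rw [uIcc_of_le hab.le]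
      exact Complex.continuous_im.comp_continuousOn hφcont
    · intro x hx
      have hxI : x ∈ Ioc (0:ℝ) l := hsub ⟨hx.1.le, hx.2.le⟩
      have := himpos x hxI
      rw [hφdef]
      simp only [Complex.mul_im]
      norm_num
      linarith
    · exact hab
  linarith
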